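/- arXiv:2407.17928 — 2 statements merged into one kernel-verified Lean document; each statement's English description precedes it below -/
import Mathlib

section
/- (Discrete Picone inequality) Let 1 < p < ∞ and let a, b, c, d be nonnegative real numbers with a > 0 and b > 0. Then |a − b|^{p−2}(a − b) ( c^p / a^{p−1} − d^p / b^{p−1} ) ≤ |c − d|^p. -/
open Real

lemma picone_core (p : ℝ) (hp : 1 ≤ p) (x y l : ℝ) (hx : 0 ≤ x) (hy : 0 ≤ y)
    (hl : 0 < l) (hl1 : l < 1) :
    (x + y) ^ p ≤ l ^ (1 - p) * x ^ p + (1 - l) ^ (1 - p) * y ^ p := by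
  have hl1' : 0 < 1 - l := by linarith
  have h := (convexOn_rpow hp).2 (Set.mem_Ici.2 (div_nonneg hx hl.le))
      (Set.mem_Ici.2 (div_nonneg hy hl1'.le)) hl.le hl1'.le (by ring)
  simp only [smul_eq_mul] at h
  have hx' : l * (x / l) = x := by field_simp
  have hy' : (1 - l) * (y / (1 - l)) = y := by field_simp
  rw [hx', hy'] at h
  have e1 : l * (x / l) ^ p = l ^ (1 - p) * x ^ p := by
    rw [Real.div_rpow hx hl.le, Real.rpow_sub hl, Real.rpow_one]; ring
  have e2 : (1 - l) * (y / (1 - l)) ^ p = (1 - l) ^ (1 - p) * y ^ p := by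
    rw [Real.div_rpow hy hl1'.le, Real.rpow_sub hl1', Real.rpow_one]; ring
  rw [e1, e2] at h
  exact h

lemma picone_aux (p : ℝ) (hp : 1 < p) (a b c d : ℝ) (ha : 0 < a) (hb : 0 < b)
    (hc : 0 ≤ c) (hd : 0 ≤ d) (hba : b ≤ a) :
    |a - b| ^ (p - 2) * (a - b) * (c ^ p / a ^ (p - 1) - d ^ p / b ^ (p - 1))
      ≤ |c - d| ^ p := by
  rcases eq_or_lt_of_le hba with heq | hlt
  · rw [← heq]
    simp only [sub_self, mul_zero, zero_mul]
    positivity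
  · have hab : 0 < a - b := by linarith
    have hA : (0:ℝ) < a ^ (p-1) := Real.rpow_pos_of_pos ha _
    have hB : (0:ℝ) < b ^ (p-1) := Real.rpow_pos_of_pos hb _
    have hE : (0:ℝ) < (a - b) ^ (p-1) := Real.rpow_pos_of_pos hab _
    have hpow : |a - b| ^ (p - 2) * (a - b) = (a - b) ^ (p - 1) := by
      rw [abs_of_pos hab]
      have := Real.rpow_add hab (p-2) 1
      rw [Real.rpow_one] at this
      rw [show p-1 = p-2+1 by ring, this]
    rw [hpow]
    rcases le_or_gt c d with hcd | hdc
    · have h1 : c ^ p / a ^ (p-1) ≤ d ^ p / b ^ (p-1) :=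
        div_le_div₀ (Real.rpow_nonneg hd p)
          (Real.rpow_le_rpow hc hcd (by linarith))
          hB (Real.rpow_le_rpow hb.le hba (by linarith))
      have h2 : (a - b) ^ (p-1) * (c ^ p / a ^ (p-1) - d ^ p / b ^ (p-1)) ≤ 0 :=
        mul_nonpos_of_nonneg_of_nonpos hE.le (by linarith)
      have h3 : (0:ℝ) ≤ |c - d| ^ p := Real.rpow_nonneg (abs_nonneg _) p
      linarith
    · have hl : 0 < (a - b) / a := div_pos hab ha
      have hl1 : (a - b) / a < 1 := (div_lt_one ha).2 (by linarith)
      have key := picone_core p hp.le (c - d) d ((a-b)/a) (by linarith) hd hl hl1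
      rw [sub_add_cancel] at key
      have hrw : 1 - (a - b) / a = b / a := by field_simp; ring
      rw [hrw] at key
      have e1 : ((a-b)/a) ^ (1-p) = a ^ (p-1) / (a-b) ^ (p-1) := by
        rw [show (1-p) = -(p-1) by ring, Real.rpow_neg (by positivity),
          Real.div_rpow hab.le ha.le, inv_div]
      have e2 : (b/a) ^ (1-p) = a ^ (p-1) / b ^ (p-1) := by
        rw [show (1-p) = -(p-1) by ring, Real.rpow_neg (by positivity),
          Real.div_rpow hb.le ha.le, inv_div]
      rw [e1, e2] at key
      rw [abs_of_pos (show (0:ℝ) < c - d by linarith)]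
      have key2 : (a-b)^(p-1)/a^(p-1) * (c ^ p) ≤ (c-d)^p + (a-b)^(p-1)/b^(p-1) * d ^ p := by
        have h := mul_le_mul_of_nonneg_left key (le_of_lt (div_pos hE hA))
        have heq : (a-b)^(p-1)/a^(p-1) * (a ^ (p-1) / (a-b) ^ (p-1) * (c-d)^p
            + a ^ (p-1) / b ^ (p-1) * d ^ p)
            = (c-d)^p + (a-b)^(p-1)/b^(p-1) * d ^ p := by
          field_simp
        rw [heq] at h
        exact h
      have : (a-b)^(p-1) * (c ^ p / a ^ (p-1) - d ^ p / b ^ (p-1))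
          = (a-b)^(p-1)/a^(p-1) * (c ^ p) - (a-b)^(p-1)/b^(p-1) * d ^ p := by ring
      linarith [key2, this.ge, this.le]

/-- Discrete Picone inequality (pointwise form): for `1 < p`, `a, b > 0` and `c, d ≥ 0`,
`|a − b|^{p−2}(a − b)(c^p/a^{p−1} − d^p/b^{p−1}) ≤ |c − d|^p`. -/
theorem discrete_picone_inequality (p : ℝ) (hp : 1 < p)
    (a b c d : ℝ) (ha : 0 < a) (hb : 0 < b) (hc : 0 ≤ c) (hd : 0 ≤ d) :
    |a - b| ^ (p - 2) * (a - b) * (c ^ p / a ^ (p - 1) - d ^ p / b ^ (p - 1))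
      ≤ |c - d| ^ p := by
  rcases le_total b a with h | h
  · exact picone_aux p hp a b c d ha hb hc hd h
  · have h2 := picone_aux p hp b a d c hb ha hd hc h
    rw [abs_sub_comm b a, abs_sub_comm d c] at h2
    refine le_trans (le_of_eq ?_) h2
    ring
end

section
/- Let α > 0 and define ζ₊(f,k) = α ∫_k^f |s|^{α−1} (s−k)₊ ds and ζ₋(f,k) = −α ∫_k^f |s|^{α−1} (s−k)₋ ds for f, k ∈ ℝ. Then there exists a constant γ = γ(α) > 0 such that for all f, k ∈ ℝ: (1/γ) (|f|+|k|)^{α−1} (f−k)₊² ≤ ζ₊(f,k) ≤ γ (|f|+|k|)^{α−1} (f−k)₊², and the same two-sided bound holds for ζ₋ with (f−k)₋ in place of (f−k)₊. -/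
open Real MeasureTheory

open intervalIntegral

noncomputable def zphi (α x : ℝ) : ℝ := if 0 ≤ x then x ^ α else -((-x) ^ α)

lemma zphi_of_nonneg {α x : ℝ} (hx : 0 ≤ x) : zphi α x = x ^ α := if_pos hx

lemma zphi_of_neg {α x : ℝ} (hx : x < 0) : zphi α x = -((-x) ^ α) := if_neg (not_le.2 hx)

lemma zII0' {α : ℝ} (hα : 0 < α) {c : ℝ} (hc : 0 ≤ c) :
    IntervalIntegrable (fun s => |s| ^ (α - 1)) volume 0 c := by
  have h := intervalIntegral.intervalIntegrable_rpow' (a := 0) (b := c)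
    (by linarith : (-1 : ℝ) < α - 1)
  rw [intervalIntegrable_iff] at h ⊢
  refine h.congr_fun ?_ measurableSet_uIoc
  intro x hx
  rw [Set.uIoc_of_le hc] at hx
  simp only [abs_of_nonneg hx.1.le]

lemma zII0 {α : ℝ} (hα : 0 < α) (c : ℝ) :
    IntervalIntegrable (fun s => |s| ^ (α - 1)) volume 0 c := by
  rcases le_or_gt 0 c with hc | hc
  · exact zII0' hα hc
  · have h := (zII0' hα (by linarith : (0:ℝ) ≤ -c))
    have h2 := (IntervalIntegrable.iff_comp_neg (by simp)).mp h
    simp only [abs_neg, neg_zero, neg_neg] at h2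
    exact h2.symm.symm

lemma zII {α : ℝ} (hα : 0 < α) (a b : ℝ) :
    IntervalIntegrable (fun s => |s| ^ (α - 1)) volume a b :=
  (zII0 hα a).symm.trans (zII0 hα b)

lemma zFTC0' {α : ℝ} (hα : 0 < α) {c : ℝ} (hc : 0 ≤ c) :
    ∫ s in (0:ℝ)..c, |s| ^ (α - 1) = c ^ α / α := by
  rw [intervalIntegral.integral_congr (g := fun s => s ^ (α - 1))
      (fun x hx => by rw [Set.uIcc_of_le hc] at hx; simp [abs_of_nonneg hx.1])]
  rw [integral_rpow (Or.inl (by linarith : (-1:ℝ) < α - 1))]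
  rw [sub_add_cancel, Real.zero_rpow hα.ne', sub_zero]

lemma zFTC0 {α : ℝ} (hα : 0 < α) (c : ℝ) :
    ∫ s in (0:ℝ)..c, |s| ^ (α - 1) = zphi α c / α := by
  rcases le_or_gt 0 c with hc | hc
  · rw [zFTC0' hα hc, zphi_of_nonneg hc]
  · have h2 : (∫ s in c..(0:ℝ), |s| ^ (α - 1)) = (-c) ^ α / α := by
      have h3 := intervalIntegral.integral_comp_neg (a := c) (b := 0)
        (fun s => |s| ^ (α - 1))
      simp only [abs_neg, neg_zero] at h3
      rw [h3, zFTC0' hα (by linarith : (0:ℝ) ≤ -c)]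
    rw [intervalIntegral.integral_symm c 0, h2, zphi_of_neg hc]
    ring

lemma zFTC {α : ℝ} (hα : 0 < α) (a b : ℝ) :
    ∫ s in a..b, |s| ^ (α - 1) = zphi α b / α - zphi α a / α := by
  have h := intervalIntegral.integral_add_adjacent_intervals (zII hα a 0) (zII hα 0 b)
  have ha : (∫ s in a..(0:ℝ), |s| ^ (α - 1)) = -(zphi α a / α) := by
    rw [intervalIntegral.integral_symm 0 a, zFTC0 hα a]
  rw [← h, ha, zFTC0 hα b]
  ring

lemma z_t_le_rpow {α t : ℝ} (hα : 0 < α) (hα1 : α ≤ 1) (ht0 : 0 ≤ t) (ht1 : t ≤ 1) :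
    t ≤ t ^ α := by
  rcases eq_or_lt_of_le ht0 with h | h
  · rw [← h, Real.zero_rpow hα.ne']
  · calc t = t ^ (1:ℝ) := (Real.rpow_one t).symm
      _ ≤ t ^ α := Real.rpow_le_rpow_of_exponent_ge h ht1 hα1

lemma z_rpow_le_t {α t : ℝ} (hα1 : 1 ≤ α) (ht0 : 0 ≤ t) (ht1 : t ≤ 1) :
    t ^ α ≤ t := by
  rcases eq_or_lt_of_le ht0 with h | h
  · rw [← h, Real.zero_rpow (by linarith : α ≠ 0)]
  · calc t ^ α ≤ t ^ (1:ℝ) := Real.rpow_le_rpow_of_exponent_ge h ht1 hα1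
      _ = t := Real.rpow_one t

/-- Bernoulli (α ≥ 1): `1 + α(t-1) ≤ t^α`, i.e. `1 - t^α ≤ α(1-t)`. -/
lemma z_bern_ge {α t : ℝ} (hα1 : 1 ≤ α) (ht0 : 0 ≤ t) :
    1 - t ^ α ≤ α * (1 - t) := by
  have h := one_add_mul_self_le_rpow_one_add (s := t - 1) (by linarith) hα1
  have : (1 + (t - 1)) = t := by ring
  rw [this] at h
  linarith

/-- Bernoulli (α ≤ 1): `t^α ≤ 1 + α(t-1)`, i.e. `α(1-t) ≤ 1 - t^α`. -/
lemma z_bern_le {α t : ℝ} (hα : 0 < α) (hα1 : α ≤ 1) (ht0 : 0 ≤ t) :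
    α * (1 - t) ≤ 1 - t ^ α := by
  have h := rpow_one_add_le_one_add_mul_self (s := t - 1) (by linarith) hα.le hα1
  have : (1 + (t - 1)) = t := by ring
  rw [this] at h
  linarith

/-- Same-sign two-point bounds: for `0 ≤ b ≤ a`,
`min α 1 * a^(α-1) * (a-b) ≤ a^α - b^α ≤ max α 1 * a^(α-1) * (a-b)`. -/
lemma z_same_sign {α a b : ℝ} (hα : 0 < α) (hb : 0 ≤ b) (hba : b ≤ a) :
    min α 1 * (a ^ (α - 1)) * (a - b) ≤ a ^ α - b ^ α ∧
      a ^ α - b ^ α ≤ max α 1 * (a ^ (α - 1)) * (a - b) := by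
  have ha : 0 ≤ a := hb.trans hba
  rcases eq_or_lt_of_le ha with h0 | h0
  · rw [← h0] at hba ⊢
    have hb0 : b = 0 := le_antisymm hba hb
    rw [hb0]
    norm_num
  · set t := b / a with ht
    have ht0 : 0 ≤ t := div_nonneg hb h0.le
    have ht1 : t ≤ 1 := (div_le_one h0).2 hba
    have hbt : b = t * a := by rw [ht, div_mul_cancel₀ b h0.ne']
    have hbα : b ^ α = t ^ α * a ^ α := by rw [hbt, Real.mul_rpow ht0 h0.le]
    have haa : a ^ α = a ^ (α - 1) * a := by
      rw [← Real.rpow_add_one h0.ne' (α - 1), sub_add_cancel]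
    have hA : 0 ≤ a ^ (α - 1) := Real.rpow_nonneg h0.le _
    have key : a ^ α - b ^ α = (1 - t ^ α) * (a ^ (α - 1) * a) := by
      rw [hbα, ← haa]; ring
    have key2 : ∀ C : ℝ, C * (a ^ (α - 1)) * (a - b) = (C * (1 - t)) * (a ^ (α - 1) * a) := by
      intro C; rw [hbt]; ring
    constructor
    · rw [key, key2]
      apply mul_le_mul_of_nonneg_right _ (mul_nonneg hA h0.le)
      rcases le_total α 1 with h1 | h1
      · rw [min_eq_left h1]; exact z_bern_le hα h1 ht0
      · rw [min_eq_right h1]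
        have := z_rpow_le_t h1 ht0 ht1
        linarith
    · rw [key, key2]
      apply mul_le_mul_of_nonneg_right _ (mul_nonneg hA h0.le)
      rcases le_total α 1 with h1 | h1
      · rw [max_eq_right h1]
        have := z_t_le_rpow hα h1 ht0 ht1
        linarith
      · rw [max_eq_left h1]; exact z_bern_ge h1 ht0

lemma zphi_neg {α : ℝ} (hα : 0 < α) (x : ℝ) : zphi α (-x) = -zphi α x := by
  rcases lt_trichotomy x 0 with h | h | h
  · rw [zphi_of_neg h, zphi_of_nonneg (by linarith : (0:ℝ) ≤ -x), neg_neg]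
  · rw [h]
    simp [zphi, Real.zero_rpow hα.ne']
  · rw [zphi_of_nonneg h.le, zphi_of_neg (by linarith : -x < 0), neg_neg]

lemma z_base_compare {α P M : ℝ} (hP : 0 < P) (h1 : M ≤ 2 * P) (h2 : P ≤ 2 * M) :
    (2:ℝ) ^ (-|α - 1|) * M ^ (α - 1) ≤ P ^ (α - 1) := by
  have hM : 0 < M := by linarith
  rcases le_total α 1 with h | h
  · have habs : -|α - 1| = α - 1 := by
      rw [abs_of_nonpos (by linarith : α - 1 ≤ 0)]; ring
    rw [habs]
    have hle : (2 * M) ^ (α - 1) ≤ P ^ (α - 1) :=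
      Real.rpow_le_rpow_of_nonpos hP h2 (by linarith)
    calc (2:ℝ) ^ (α - 1) * M ^ (α - 1) = (2 * M) ^ (α - 1) :=
          (Real.mul_rpow (by norm_num) hM.le).symm
      _ ≤ P ^ (α - 1) := hle
  · have habs : |α - 1| = α - 1 := abs_of_nonneg (by linarith)
    rw [habs]
    have hle : (M / 2) ^ (α - 1) ≤ P ^ (α - 1) :=
      Real.rpow_le_rpow (by positivity) (by linarith) (by linarith)
    calc (2:ℝ) ^ (-(α - 1)) * M ^ (α - 1) = (M / 2) ^ (α - 1) := by
          rw [Real.div_rpow hM.le (by norm_num : (0:ℝ) ≤ 2),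
            Real.rpow_neg (by norm_num : (0:ℝ) ≤ 2)]
          ring
      _ ≤ P ^ (α - 1) := hle

lemma z_base_compare' {α P M : ℝ} (hP : 0 < P) (h1 : M ≤ 2 * P) (h2 : P ≤ 2 * M) :
    P ^ (α - 1) ≤ (2:ℝ) ^ |α - 1| * M ^ (α - 1) := by
  have hM : 0 < M := by linarith
  have h := z_base_compare (α := α) hM h2 h1
  have h2pos : (0:ℝ) < (2:ℝ) ^ |α - 1| := Real.rpow_pos_of_pos (by norm_num) _
  have hinv : (2:ℝ) ^ |α - 1| * (2:ℝ) ^ (-|α - 1|) = 1 := by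
    rw [← Real.rpow_add (by norm_num)]; norm_num
  calc P ^ (α - 1) = (2:ℝ) ^ |α - 1| * ((2:ℝ) ^ (-|α - 1|) * P ^ (α - 1)) := by
        rw [← mul_assoc, hinv, one_mul]
    _ ≤ (2:ℝ) ^ |α - 1| * M ^ (α - 1) := mul_le_mul_of_nonneg_left h h2pos.le

noncomputable def zcl (α : ℝ) : ℝ := min (min α 1 * (2:ℝ) ^ (-|α - 1|)) ((2:ℝ) ^ (-α))

noncomputable def zcu (α : ℝ) : ℝ := max (max α 1 * (2:ℝ) ^ |α - 1|) 2

lemma zcl_pos {α : ℝ} (hα : 0 < α) : 0 < zcl α :=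
  lt_min (mul_pos (lt_min hα one_pos) (Real.rpow_pos_of_pos (by norm_num) _))
    (Real.rpow_pos_of_pos (by norm_num) _)

lemma zcu_pos {α : ℝ} (hα : 0 < α) : 0 < zcu α :=
  lt_of_lt_of_le (by norm_num) (le_max_right _ _)

lemma zphi_bounds_nonneg {α a b : ℝ} (hα : 0 < α) (hb : 0 ≤ b) (hba : b ≤ a) :
    zcl α * ((|a| + |b|) ^ (α - 1) * (a - b)) ≤ zphi α a - zphi α b ∧
      zphi α a - zphi α b ≤ zcu α * ((|a| + |b|) ^ (α - 1) * (a - b)) := by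
  have ha : 0 ≤ a := hb.trans hba
  rw [zphi_of_nonneg ha, zphi_of_nonneg hb, abs_of_nonneg ha, abs_of_nonneg hb]
  rcases eq_or_lt_of_le ha with h0 | h0
  · rw [← h0] at hba ⊢
    have hb0 : b = 0 := le_antisymm hba hb
    rw [hb0]
    norm_num
  · obtain ⟨hlow, hup⟩ := z_same_sign hα hb hba
    have hd : 0 ≤ a - b := by linarith
    have hMle : a + b ≤ 2 * a := by linarith
    have hMge : a ≤ 2 * (a + b) := by linarith
    have hbc := z_base_compare (α := α) h0 hMle hMge
    have hbc' := z_base_compare' (α := α) h0 hMle hMge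
    constructor
    · calc zcl α * ((a + b) ^ (α - 1) * (a - b))
          ≤ (min α 1 * (2:ℝ) ^ (-|α - 1|)) * ((a + b) ^ (α - 1) * (a - b)) := by
            apply mul_le_mul_of_nonneg_right (min_le_left _ _)
            have : (0:ℝ) ≤ (a + b) ^ (α - 1) := Real.rpow_nonneg (by linarith) _
            positivity
        _ = min α 1 * (((2:ℝ) ^ (-|α - 1|) * (a + b) ^ (α - 1)) * (a - b)) := by ring
        _ ≤ min α 1 * (a ^ (α - 1) * (a - b)) := by
            apply mul_le_mul_of_nonneg_left _ (le_min hα.le zero_le_one)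
            exact mul_le_mul_of_nonneg_right hbc hd
        _ = min α 1 * a ^ (α - 1) * (a - b) := by ring
        _ ≤ a ^ α - b ^ α := hlow
    · calc a ^ α - b ^ α ≤ max α 1 * a ^ (α - 1) * (a - b) := hup
        _ ≤ max α 1 * ((2:ℝ) ^ |α - 1| * (a + b) ^ (α - 1)) * (a - b) := by
            apply mul_le_mul_of_nonneg_right _ hd
            apply mul_le_mul_of_nonneg_left hbc' (le_trans zero_le_one (le_max_right _ _))
        _ = (max α 1 * (2:ℝ) ^ |α - 1|) * ((a + b) ^ (α - 1) * (a - b)) := by ring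
        _ ≤ zcu α * ((a + b) ^ (α - 1) * (a - b)) := by
            apply mul_le_mul_of_nonneg_right (le_max_left _ _)
            have : (0:ℝ) ≤ (a + b) ^ (α - 1) := Real.rpow_nonneg (by linarith) _
            positivity

lemma zphi_bounds {α a b : ℝ} (hα : 0 < α) (hba : b ≤ a) :
    zcl α * ((|a| + |b|) ^ (α - 1) * (a - b)) ≤ zphi α a - zphi α b ∧
      zphi α a - zphi α b ≤ zcu α * ((|a| + |b|) ^ (α - 1) * (a - b)) := by
  rcases le_or_gt 0 b with hb | hb
  · exact zphi_bounds_nonneg hα hb hba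
  rcases le_or_gt a 0 with ha | ha
  · -- reflect: b < 0, a ≤ 0
    have h := zphi_bounds_nonneg hα (by linarith : (0:ℝ) ≤ -a) (by linarith : -a ≤ -b)
    rw [zphi_neg hα, zphi_neg hα, abs_neg, abs_neg] at h
    constructor
    · calc zcl α * ((|a| + |b|) ^ (α - 1) * (a - b))
          = zcl α * ((|b| + |a|) ^ (α - 1) * (-b - -a)) := by ring_nf
        _ ≤ -zphi α b - -zphi α a := h.1
        _ = zphi α a - zphi α b := by ring
    · calc zphi α a - zphi α b = -zphi α b - -zphi α a := by ring
        _ ≤ zcu α * ((|b| + |a|) ^ (α - 1) * (-b - -a)) := h.2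
        _ = zcu α * ((|a| + |b|) ^ (α - 1) * (a - b)) := by ring_nf
  · -- mixed: b < 0 < a
    have hM : 0 < a - b := by linarith
    have habs : |a| + |b| = a - b := by
      rw [abs_of_pos ha, abs_of_neg hb]; ring
    rw [habs, zphi_of_nonneg ha.le, zphi_of_neg hb, sub_neg_eq_add]
    set M := a - b with hMdef
    have hMα : M ^ α = M ^ (α - 1) * M := by
      rw [← Real.rpow_add_one hM.ne' (α - 1), sub_add_cancel]
    have haM : a ^ α ≤ M ^ α := Real.rpow_le_rpow ha.le (by linarith) hα.le
    have hbM : (-b) ^ α ≤ M ^ α := Real.rpow_le_rpow (by linarith) (by linarith) hα.le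
    constructor
    · -- lower: a^α + (-b)^α ≥ (M/2)^α = 2^(-α) M^(α-1) M
      have hhalf : (M / 2) ^ α ≤ a ^ α + (-b) ^ α := by
        rcases le_total a (-b) with hc | hc
        · have h1 : (M / 2) ^ α ≤ (-b) ^ α :=
            Real.rpow_le_rpow (by positivity) (by linarith) hα.le
          have h2 : (0:ℝ) ≤ a ^ α := Real.rpow_nonneg ha.le _
          linarith
        · have h1 : (M / 2) ^ α ≤ a ^ α :=
            Real.rpow_le_rpow (by positivity) (by linarith) hα.le
          have h2 : (0:ℝ) ≤ (-b) ^ α := Real.rpow_nonneg (by linarith) _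
          linarith
      have heq : (M / 2) ^ α = (2:ℝ) ^ (-α) * (M ^ (α - 1) * M) := by
        rw [← hMα, Real.div_rpow hM.le (by norm_num : (0:ℝ) ≤ 2),
          Real.rpow_neg (by norm_num : (0:ℝ) ≤ 2)]
        ring
      calc zcl α * (M ^ (α - 1) * M)
          ≤ (2:ℝ) ^ (-α) * (M ^ (α - 1) * M) := by
            apply mul_le_mul_of_nonneg_right (min_le_right _ _)
            have : (0:ℝ) ≤ M ^ (α - 1) := Real.rpow_nonneg hM.le _
            positivity
        _ = (M / 2) ^ α := heq.symm
        _ ≤ a ^ α + (-b) ^ α := hhalf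
    · calc a ^ α + (-b) ^ α ≤ 2 * M ^ α := by linarith
        _ = 2 * (M ^ (α - 1) * M) := by rw [hMα]
        _ ≤ zcu α * (M ^ (α - 1) * M) := by
            apply mul_le_mul_of_nonneg_right (le_max_right _ _)
            have : (0:ℝ) ≤ M ^ (α - 1) := Real.rpow_nonneg hM.le _
            positivity

noncomputable def zgam (α : ℝ) : ℝ := zcu α + 4 * (2:ℝ) ^ |α - 1| / zcl α

lemma zgam_pos {α : ℝ} (hα : 0 < α) : 0 < zgam α :=
  add_pos (zcu_pos hα)
    (div_pos (by positivity) (zcl_pos hα))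

lemma zcu_le_zgam {α : ℝ} (hα : 0 < α) : zcu α ≤ zgam α :=
  le_add_of_nonneg_right (div_pos (by positivity) (zcl_pos hα)).le

lemma zgam_inv {α : ℝ} (hα : 0 < α) :
    1 / zgam α ≤ zcl α * (2:ℝ) ^ (-|α - 1|) / 4 := by
  have ht : (0:ℝ) < (2:ℝ) ^ |α - 1| := Real.rpow_pos_of_pos (by norm_num) _
  have hc := zcl_pos hα
  have h2 : 0 < 4 * (2:ℝ) ^ |α - 1| / zcl α := div_pos (by positivity) hc
  have h1 : 4 * (2:ℝ) ^ |α - 1| / zcl α ≤ zgam α := le_add_of_nonneg_left (zcu_pos hα).le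
  calc 1 / zgam α ≤ 1 / (4 * (2:ℝ) ^ |α - 1| / zcl α) := one_div_le_one_div_of_le h2 h1
    _ = zcl α * (2:ℝ) ^ (-|α - 1|) / 4 := by
        rw [Real.rpow_neg (by norm_num : (0:ℝ) ≤ 2)]
        rw [one_div, inv_div]
        rw [div_eq_div_iff (by positivity) (by norm_num : (4:ℝ) ≠ 0)]
        field_simp

lemma zcore {α : ℝ} (hα : 0 < α) (f k : ℝ) :
    (1 / zgam α) * (|f| + |k|) ^ (α - 1) * (max (f - k) 0) ^ 2
        ≤ α * ∫ s in k..f, |s| ^ (α - 1) * max (s - k) 0 ∧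
      α * ∫ s in k..f, |s| ^ (α - 1) * max (s - k) 0
        ≤ zgam α * (|f| + |k|) ^ (α - 1) * (max (f - k) 0) ^ 2 := by
  rcases le_or_gt f k with hfk | hfk
  · have hmax : max (f - k) 0 = 0 := max_eq_right (by linarith)
    have hint : (∫ s in k..f, |s| ^ (α - 1) * max (s - k) 0) = 0 := by
      rw [intervalIntegral.integral_congr (g := fun _ => (0:ℝ))
        (fun x hx => by
          rw [Set.uIcc_of_ge hfk] at hx
          simp [max_eq_right (by linarith [hx.2] : x - k ≤ 0)])]
      simp
    rw [hmax, hint]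
    norm_num
  · -- k < f
    have hmax : max (f - k) 0 = f - k := max_eq_left (by linarith)
    have hd : 0 < f - k := by linarith
    have hM : 0 < |f| + |k| := by
      rcases eq_or_ne f 0 with h | h
      · have hk : k ≠ 0 := fun hk => by rw [h, hk] at hfk; exact lt_irrefl 0 hfk
        positivity
      · positivity
    have hMpow : (0:ℝ) ≤ (|f| + |k|) ^ (α - 1) := Real.rpow_nonneg hM.le _
    have hii : ∀ x y : ℝ, IntervalIntegrable (fun s => |s| ^ (α - 1) * (s - k)) volume x y :=
      fun x y => (zII hα x y).mul_continuousOn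
        ((continuous_id.sub continuous_const).continuousOn)
    have hic : ∀ x y c : ℝ, IntervalIntegrable (fun s => |s| ^ (α - 1) * c) volume x y :=
      fun x y c => (zII hα x y).mul_continuousOn continuousOn_const
    have hIcongr : (∫ s in k..f, |s| ^ (α - 1) * max (s - k) 0)
        = ∫ s in k..f, |s| ^ (α - 1) * (s - k) := by
      refine intervalIntegral.integral_congr fun x hx => ?_
      rw [Set.uIcc_of_le hfk.le] at hx
      simp [max_eq_left (by linarith [hx.1] : (0:ℝ) ≤ x - k)]
    rw [hmax, hIcongr]
    constructor
    · -- LOWER BOUND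
      set m : ℝ := (k + f) / 2 with hm
      have hm1 : k ≤ m := by rw [hm]; linarith
      have hm2 : m ≤ f := by rw [hm]; linarith
      have hfm : f - m = (f - k) / 2 := by rw [hm]; ring
      have hP : 0 < |f| + |m| := by
        rcases eq_or_ne f 0 with h | h
        · have hmneg : m < 0 := by rw [hm, h]; linarith
          have : 0 < |m| := abs_pos.2 hmneg.ne
          positivity
        · positivity
      have hPM1 : |f| + |k| ≤ 2 * (|f| + |m|) := by
        have hk2 : k = 2 * m - f := by rw [hm]; ring
        have : |k| ≤ 2 * |m| + |f| := by
          rw [hk2, sub_eq_add_neg]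
          calc |2 * m + -f| ≤ |2 * m| + |-f| := abs_add_le _ _
            _ = 2 * |m| + |f| := by rw [abs_neg, abs_mul]; norm_num
        linarith
      have hPM2 : |f| + |m| ≤ 2 * (|f| + |k|) := by
        have : |m| ≤ (|k| + |f|) / 2 := by
          rw [hm, abs_div]
          have : |k + f| ≤ |k| + |f| := abs_add_le _ _
          rw [abs_of_nonneg (by norm_num : (0:ℝ) ≤ 2)]
          linarith
        have h1 := abs_nonneg f
        have h2 := abs_nonneg k
        linarith
      have hbcP := z_base_compare (α := α) hP hPM1 hPM2
      have hsplit := intervalIntegral.integral_add_adjacent_intervals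
        (hii k m) (hii m f)
      have h1 : 0 ≤ ∫ s in k..m, |s| ^ (α - 1) * (s - k) :=
        intervalIntegral.integral_nonneg hm1
          (fun x hx => mul_nonneg (Real.rpow_nonneg (abs_nonneg x) _)
            (by linarith [hx.1]))
      have h2 : (∫ s in m..f, |s| ^ (α - 1) * ((f - k) / 2))
          ≤ ∫ s in m..f, |s| ^ (α - 1) * (s - k) := by
        refine intervalIntegral.integral_mono_on hm2 (hic m f _) (hii m f) fun x hx => ?_
        have : (f - k) / 2 ≤ x - k := by
          have := hx.1
          rw [hm] at this
          linarith
        exact mul_le_mul_of_nonneg_left this (Real.rpow_nonneg (abs_nonneg x) _)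
      have h3 : (∫ s in m..f, |s| ^ (α - 1) * ((f - k) / 2))
          = (zphi α f / α - zphi α m / α) * ((f - k) / 2) := by
        rw [intervalIntegral.integral_mul_const, zFTC hα m f]
      have hphi := (zphi_bounds hα hm2).1
      rw [hfm] at hphi
      calc 1 / zgam α * (|f| + |k|) ^ (α - 1) * (f - k) ^ 2
          ≤ (zcl α * (2:ℝ) ^ (-|α - 1|) / 4) * (|f| + |k|) ^ (α - 1) * (f - k) ^ 2 := by
            apply mul_le_mul_of_nonneg_right _ (by positivity)
            exact mul_le_mul_of_nonneg_right (zgam_inv hα) hMpow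
        _ = (zcl α / 4) * ((2:ℝ) ^ (-|α - 1|) * (|f| + |k|) ^ (α - 1)) * (f - k) ^ 2 := by
            ring
        _ ≤ (zcl α / 4) * (|f| + |m|) ^ (α - 1) * (f - k) ^ 2 := by
            apply mul_le_mul_of_nonneg_right _ (by positivity)
            exact mul_le_mul_of_nonneg_left hbcP (by linarith [zcl_pos hα])
        _ = (zcl α * ((|f| + |m|) ^ (α - 1) * ((f - k) / 2))) * ((f - k) / 2) := by
            ring
        _ ≤ (zphi α f - zphi α m) * ((f - k) / 2) :=
            mul_le_mul_of_nonneg_right hphi (by linarith)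
        _ = α * ((zphi α f / α - zphi α m / α) * ((f - k) / 2)) := by
            field_simp
        _ = α * ∫ s in m..f, |s| ^ (α - 1) * ((f - k) / 2) := by rw [h3]
        _ ≤ α * ∫ s in m..f, |s| ^ (α - 1) * (s - k) :=
            mul_le_mul_of_nonneg_left h2 hα.le
        _ ≤ α * ∫ s in k..f, |s| ^ (α - 1) * (s - k) := by
            apply mul_le_mul_of_nonneg_left _ hα.le
            rw [← hsplit]
            linarith
    · -- UPPER BOUND
      have hup1 : (∫ s in k..f, |s| ^ (α - 1) * (s - k))
          ≤ ∫ s in k..f, |s| ^ (α - 1) * (f - k) := by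
        refine intervalIntegral.integral_mono_on hfk.le (hii k f) (hic k f _) fun x hx => ?_
        exact mul_le_mul_of_nonneg_left (by linarith [hx.2])
          (Real.rpow_nonneg (abs_nonneg x) _)
      have hup2 : (∫ s in k..f, |s| ^ (α - 1) * (f - k))
          = (zphi α f / α - zphi α k / α) * (f - k) := by
        rw [intervalIntegral.integral_mul_const, zFTC hα k f]
      have hphi := (zphi_bounds hα hfk.le).2
      calc α * ∫ s in k..f, |s| ^ (α - 1) * (s - k)
          ≤ α * ((zphi α f / α - zphi α k / α) * (f - k)) := by
            rw [← hup2]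
            exact mul_le_mul_of_nonneg_left hup1 hα.le
        _ = (zphi α f - zphi α k) * (f - k) := by
            field_simp
        _ ≤ (zcu α * ((|f| + |k|) ^ (α - 1) * (f - k))) * (f - k) :=
            mul_le_mul_of_nonneg_right hphi hd.le
        _ = (zcu α) * (|f| + |k|) ^ (α - 1) * (f - k) ^ 2 := by ring
        _ ≤ zgam α * (|f| + |k|) ^ (α - 1) * (f - k) ^ 2 := by
            apply mul_le_mul_of_nonneg_right _ (by positivity)
            exact mul_le_mul_of_nonneg_right (zcu_le_zgam hα) hMpow

/-- Two-sided bounds for `ζ_±(f,k)`: with `ζ₊(f,k) = α ∫_k^f |s|^{α−1}(s−k)₊ ds` and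
`ζ₋(f,k) = −α ∫_k^f |s|^{α−1}(s−k)₋ ds`, there is `γ = γ(α) > 0` with
`(1/γ)(|f|+|k|)^{α−1}(f−k)_±² ≤ ζ_±(f,k) ≤ γ(|f|+|k|)^{α−1}(f−k)_±²`. -/
theorem zeta_two_sided_bounds (α : ℝ) (hα : 0 < α) :
    ∃ γ > (0 : ℝ), ∀ f k : ℝ,
      ((1 / γ) * (|f| + |k|) ^ (α - 1) * (max (f - k) 0) ^ 2
          ≤ α * ∫ s in k..f, |s| ^ (α - 1) * max (s - k) 0) ∧
      (α * ∫ s in k..f, |s| ^ (α - 1) * max (s - k) 0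
          ≤ γ * (|f| + |k|) ^ (α - 1) * (max (f - k) 0) ^ 2) ∧
      ((1 / γ) * (|f| + |k|) ^ (α - 1) * (max (k - f) 0) ^ 2
          ≤ -(α * ∫ s in k..f, |s| ^ (α - 1) * max (k - s) 0)) ∧
      (-(α * ∫ s in k..f, |s| ^ (α - 1) * max (k - s) 0)
          ≤ γ * (|f| + |k|) ^ (α - 1) * (max (k - f) 0) ^ 2) := by
  refine ⟨zgam α, zgam_pos hα, fun f k => ?_⟩
  obtain ⟨l1, u1⟩ := zcore hα f k
  obtain ⟨l2, u2⟩ := zcore hα (-f) (-k)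
  have hneg : (∫ s in (-k:ℝ)..(-f), |s| ^ (α - 1) * max (s - -k) 0)
      = -(∫ s in k..f, |s| ^ (α - 1) * max (k - s) 0) := by
    have h := intervalIntegral.integral_comp_neg (a := f) (b := k)
      (fun s => |s| ^ (α - 1) * max (s - -k) 0)
    have hfun : (fun x : ℝ => |(-x)| ^ (α - 1) * max (-x - -k) 0)
        = fun x : ℝ => |x| ^ (α - 1) * max (k - x) 0 := by
      funext x
      rw [abs_neg, show -x - -k = k - x by ring]
    rw [← h]
    show (∫ x in f..k, |(-x)| ^ (α - 1) * max (-x - -k) 0)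
        = -(∫ s in k..f, |s| ^ (α - 1) * max (k - s) 0)
    rw [hfun, intervalIntegral.integral_symm k f]
  rw [abs_neg, abs_neg, show (-f - -k) = k - f by ring, hneg, mul_neg] at l2 u2
  exact ⟨l1, u1, l2, u2⟩
end
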